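/- Covering of a half-ball intersection: For every ball B_ρ(y) ⊂ B₁ ⊂ ℝⁿ, the set ℝⁿ₊ ∩ B_{ρ/2}(y) (where ℝⁿ₊ = {x_n > 0}) can be covered by at most N(n) balls of two types: balls B_{ρ/16}(y_i) with B_{ρ/8}(y_i) ⊂ ℝⁿ₊ ∩ B_ρ(y), and balls B_{3ρ/16}(z_j) with z_j ∈ {x_n = 0} and ℝⁿ₊ ∩ B_{3ρ/8}(z_j) ⊂ ℝⁿ₊ ∩ B_ρ(y); here N(n) depends only on the dimension n. -/
import Mathlib


open Metric

/-- The open upper half-space `{x_n > 0}` in Euclidean `ℝ^{n+1}`. -/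
def upperHalf (n : ℕ) : Set (EuclideanSpace ℝ (Fin (n + 1))) :=
  {x | 0 < x (Fin.last n)}

lemma coord_dist_le {n : ℕ} (x y : EuclideanSpace ℝ (Fin (n + 1))) (i : Fin (n + 1)) :
    |x i - y i| ≤ dist x y := by
  rw [EuclideanSpace.dist_eq]
  rw [show |x i - y i| = Real.sqrt ((x i - y i) ^ 2) from (Real.sqrt_sq_eq_abs _).symm]
  apply Real.sqrt_le_sqrt
  have h := Finset.single_le_sum (f := fun j => dist (x j) (y j) ^ 2)
    (fun j _ => sq_nonneg _) (Finset.mem_univ i)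
  simpa [Real.dist_eq, sq_abs] using h

/-- Covering of a half-ball intersection: for every ball `B_ρ(y) ⊆ B₁`, the set
`ℝⁿ₊ ∩ B_{ρ/2}(y)` is covered by at most `N(n)` balls `B_{ρ/16}(yᵢ)` with
`B_{ρ/8}(yᵢ) ⊆ ℝⁿ₊ ∩ B_ρ(y)` and balls `B_{3ρ/16}(zⱼ)` centered on `{x_n = 0}` with
`ℝⁿ₊ ∩ B_{3ρ/8}(zⱼ) ⊆ ℝⁿ₊ ∩ B_ρ(y)`. -/
theorem stmt17 (n : ℕ) :
    ∃ N : ℕ, ∀ (y : EuclideanSpace ℝ (Fin (n + 1))) (ρ : ℝ), 0 < ρ →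
      ball y ρ ⊆ ball 0 1 →
      ∃ (k m : ℕ), k + m ≤ N ∧
        ∃ (yc : Fin k → EuclideanSpace ℝ (Fin (n + 1)))
          (zc : Fin m → EuclideanSpace ℝ (Fin (n + 1))),
          (∀ i, ball (yc i) (ρ / 8) ⊆ upperHalf n ∩ ball y ρ) ∧
          (∀ j, zc j (Fin.last n) = 0 ∧
            upperHalf n ∩ ball (zc j) (3 * ρ / 8) ⊆ upperHalf n ∩ ball y ρ) ∧
          upperHalf n ∩ ball y (ρ / 2) ⊆
            (⋃ i, ball (yc i) (ρ / 16)) ∪ ⋃ j, ball (zc j) (3 * ρ / 16) := by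
  classical
  -- A fixed finite (1/32)-net of the closed ball of radius 1/2
  obtain ⟨t, ht⟩ : ∃ t : Finset (EuclideanSpace ℝ (Fin (n + 1))),
      closedBall (0 : EuclideanSpace ℝ (Fin (n + 1))) (1 / 2) ⊆
        ⋃ p ∈ t, ball p (1 / 32) := by
    apply (isCompact_closedBall _ _).elim_finite_subcover (fun p => ball p (1 / 32))
      (fun _ => isOpen_ball)
    intro x _
    exact Set.mem_iUnion.2 ⟨x, mem_ball_self (by norm_num)⟩
  refine ⟨2 * t.card, ?_⟩
  intro y ρ hρ _
  set T : Set (EuclideanSpace ℝ (Fin (n + 1))) := upperHalf n ∩ ball y (ρ / 2) with hTdef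
  set q : EuclideanSpace ℝ (Fin (n + 1)) → EuclideanSpace ℝ (Fin (n + 1)) :=
    fun p => y + ρ • p with hqdef
  -- scaled net property
  have hnet : ∀ w : EuclideanSpace ℝ (Fin (n + 1)), dist w y ≤ ρ / 2 →
      ∃ p ∈ t, dist w (q p) < ρ / 32 := by
    intro w hw
    have h0 : (ρ⁻¹ • (w - y)) ∈ closedBall (0 : EuclideanSpace ℝ (Fin (n + 1))) (1 / 2) := by
      rw [mem_closedBall, dist_zero_right, norm_smul, norm_inv, Real.norm_of_nonneg hρ.le]
      rw [← dist_eq_norm]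
      calc ρ⁻¹ * dist w y ≤ ρ⁻¹ * (ρ / 2) := by gcongr
        _ = 1 / 2 := by field_simp
    obtain ⟨p, hp, hmem⟩ := Set.mem_iUnion₂.1 (ht h0)
    refine ⟨p, hp, ?_⟩
    rw [mem_ball, dist_eq_norm] at hmem
    have hkey : ρ • (ρ⁻¹ • (w - y) - p) = w - q p := by
      rw [smul_sub, smul_smul, mul_inv_cancel₀ hρ.ne', one_smul]
      simp only [hqdef]
      abel
    have : dist w (q p) = ρ * ‖ρ⁻¹ • (w - y) - p‖ := by
      rw [dist_eq_norm, ← hkey, norm_smul, Real.norm_of_nonneg hρ.le]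
    rw [this]
    calc ρ * ‖ρ⁻¹ • (w - y) - p‖ < ρ * (1 / 32) := by gcongr
      _ = ρ / 32 := by ring
  -- witness choice
  set xf : EuclideanSpace ℝ (Fin (n + 1)) → EuclideanSpace ℝ (Fin (n + 1)) :=
    fun p => if h : (ball (q p) (ρ / 32) ∩ T).Nonempty then h.choose else 0 with hxfdef
  have hxf : ∀ p, (ball (q p) (ρ / 32) ∩ T).Nonempty →
      xf p ∈ ball (q p) (ρ / 32) ∩ T := by
    intro p h
    simp only [hxfdef, dif_pos h]
    exact h.choose_spec
  set proj : EuclideanSpace ℝ (Fin (n + 1)) → EuclideanSpace ℝ (Fin (n + 1)) :=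
    fun x => x - (x (Fin.last n)) • EuclideanSpace.single (Fin.last n) (1 : ℝ) with hprojdef
  have hprojlast : ∀ x, proj x (Fin.last n) = 0 := by
    intro x
    simp [hprojdef, EuclideanSpace.single_apply]
  have hprojdist : ∀ x, dist (proj x) x = |x (Fin.last n)| := by
    intro x
    rw [dist_eq_norm]
    have : proj x - x = -((x (Fin.last n)) • EuclideanSpace.single (Fin.last n) (1 : ℝ)) := by
      simp [hprojdef]
    rw [this, norm_neg, norm_smul, EuclideanSpace.norm_single]
    simp [Real.norm_eq_abs]
  -- the two finsets of centers
  set A : Finset (EuclideanSpace ℝ (Fin (n + 1))) :=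
    (t.filter fun p => (ball (q p) (ρ / 32) ∩ T).Nonempty ∧
      ρ / 8 ≤ xf p (Fin.last n)).image xf with hAdef
  set B : Finset (EuclideanSpace ℝ (Fin (n + 1))) :=
    (t.filter fun p => (ball (q p) (ρ / 32) ∩ T).Nonempty ∧
      xf p (Fin.last n) < ρ / 8).image (fun p => proj (xf p)) with hBdef
  have hAball : ∀ a ∈ A, ball a (ρ / 8) ⊆ upperHalf n ∩ ball y ρ := by
    intro a ha
    obtain ⟨p, hp, rfl⟩ := Finset.mem_image.1 ha
    obtain ⟨-, hne, hhigh⟩ := Finset.mem_filter.1 hp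
    obtain ⟨hx1, hx2, hx3⟩ := hxf p hne
    intro w hw
    rw [mem_ball] at hw
    have hcoord := coord_dist_le w (xf p) (Fin.last n)
    constructor
    · show 0 < w (Fin.last n)
      have habs : |w (Fin.last n) - xf p (Fin.last n)| < ρ / 8 :=
        lt_of_le_of_lt hcoord hw
      have := (abs_lt.1 habs).1
      linarith
    · rw [mem_ball]
      rw [mem_ball] at hx3
      calc dist w y ≤ dist w (xf p) + dist (xf p) y := dist_triangle _ _ _
        _ < ρ / 8 + ρ / 2 := add_lt_add hw hx3
        _ < ρ := by linarith
  have hBball : ∀ b ∈ B, b (Fin.last n) = 0 ∧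
      upperHalf n ∩ ball b (3 * ρ / 8) ⊆ upperHalf n ∩ ball y ρ := by
    intro b hb
    obtain ⟨p, hp, rfl⟩ := Finset.mem_image.1 hb
    obtain ⟨-, hne, hlow⟩ := Finset.mem_filter.1 hp
    obtain ⟨hx1, hx2, hx3⟩ := hxf p hne
    have hxpos : 0 < xf p (Fin.last n) := hx2
    refine ⟨hprojlast _, ?_⟩
    rintro w ⟨hw1, hw2⟩
    refine ⟨hw1, ?_⟩
    rw [mem_ball] at hw2 hx3 ⊢
    have hd : dist (proj (xf p)) (xf p) < ρ / 8 := by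
      rw [hprojdist, abs_of_pos hxpos]; exact hlow
    calc dist w y ≤ dist w (proj (xf p)) + dist (proj (xf p)) (xf p) + dist (xf p) y :=
          dist_triangle4 _ _ _ _
      _ < 3 * ρ / 8 + ρ / 8 + ρ / 2 := by exact add_lt_add (add_lt_add hw2 hd) hx3
      _ = ρ := by ring
  refine ⟨A.card, B.card, ?_, fun i => (A.equivFin.symm i : _), fun j => (B.equivFin.symm j : _),
    ?_, ?_, ?_⟩
  · calc A.card + B.card ≤ t.card + t.card :=
        add_le_add (Finset.card_image_le.trans (Finset.card_filter_le _ _))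
          (Finset.card_image_le.trans (Finset.card_filter_le _ _))
      _ = 2 * t.card := by ring
  · intro i
    exact hAball _ (A.equivFin.symm i).2
  · intro j
    exact hBball _ (B.equivFin.symm j).2
  · -- covering
    rintro w ⟨hw1, hw2⟩
    rw [mem_ball] at hw2
    obtain ⟨p, hp, hwq⟩ := hnet w hw2.le
    have hne : (ball (q p) (ρ / 32) ∩ T).Nonempty :=
      ⟨w, mem_ball.2 hwq, hw1, mem_ball.2 hw2⟩
    obtain ⟨hx1, hx2, hx3⟩ := hxf p hne
    rw [mem_ball] at hx1
    have hdwx : dist w (xf p) < ρ / 16 := by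
      calc dist w (xf p) ≤ dist w (q p) + dist (q p) (xf p) := dist_triangle _ _ _
        _ < ρ / 32 + ρ / 32 := add_lt_add hwq (by rw [dist_comm]; exact hx1)
        _ = ρ / 16 := by ring
    by_cases hcase : ρ / 8 ≤ xf p (Fin.last n)
    · left
      have haA : xf p ∈ A :=
        Finset.mem_image.2 ⟨p, Finset.mem_filter.2 ⟨hp, hne, hcase⟩, rfl⟩
      rw [Set.mem_iUnion]
      refine ⟨A.equivFin ⟨xf p, haA⟩, ?_⟩
      simp only [Equiv.symm_apply_apply]
      exact mem_ball.2 (by rwa [dist_comm] at hdwx ⊢)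
    · right
      push_neg at hcase
      have hbB : proj (xf p) ∈ B :=
        Finset.mem_image.2 ⟨p, Finset.mem_filter.2 ⟨hp, hne, hcase⟩, rfl⟩
      rw [Set.mem_iUnion]
      refine ⟨B.equivFin ⟨proj (xf p), hbB⟩, ?_⟩
      simp only [Equiv.symm_apply_apply]
      rw [mem_ball]
      have hxpos : 0 < xf p (Fin.last n) := hx2
      have hd : dist (xf p) (proj (xf p)) < ρ / 8 := by
        rw [dist_comm, hprojdist, abs_of_pos hxpos]; exact hcase
      calc dist w (proj (xf p)) ≤ dist w (xf p) + dist (xf p) (proj (xf p)) :=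
            dist_triangle _ _ _
        _ < ρ / 16 + ρ / 8 := add_lt_add hdwx hd
        _ = 3 * ρ / 16 := by ring
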